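/- Let F be a field, q ∈ F×, and A an F-algebra with commuting invertible elements Y_1, Y_2 and distinct scalars a, b ∈ F× such that Y_1 − a and Y_2 − b are nilpotent. Then 1 − Y_1Y_2^{-1} is invertible in A, so P := (1−q)(1 − Y_1Y_2^{-1})^{-1} is well-defined; moreover (1 − P)(q + P) = (Y_2 − qY_1)(Y_1 − qY_2)·((Y_2 − Y_1)(Y_1 − Y_2))^{-1}. -/

import Mathlib

private lemma ring_inv_eq {A : Type*} [Ring A] {x y : A} (hx : IsUnit x)
    (h : x * y = 1) : Ring.inverse x = y := by
  rw [← mul_one (Ring.inverse x), ← h, ← mul_assoc, Ring.inverse_mul_cancel x hx, one_mul]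

/-- Identity (QEPreUs): with `Y₁, Y₂` commuting invertible elements such that
`Y₁ - a` and `Y₂ - b` are nilpotent for distinct nonzero scalars `a ≠ b`,
the element `1 - Y₁Y₂⁻¹` is invertible and, setting
`P = (1-q)(1 - Y₁Y₂⁻¹)⁻¹`, one has
`(1-P)(q+P) = (Y₂-qY₁)(Y₁-qY₂)((Y₂-Y₁)(Y₁-Y₂))⁻¹`. -/
theorem QEPreUs_identity
    (F : Type*) [Field F] (A : Type*) [Ring A] [Algebra F A]
    (q : F) (hq : q ≠ 0) (Y₁ Y₂ : A)
    (hY₁ : IsUnit Y₁) (hY₂ : IsUnit Y₂) (hcomm : Y₁ * Y₂ = Y₂ * Y₁)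
    (a b : F) (ha : a ≠ 0) (hb : b ≠ 0) (hab : a ≠ b)
    (hna : IsNilpotent (Y₁ - algebraMap F A a))
    (hnb : IsNilpotent (Y₂ - algebraMap F A b)) :
    IsUnit (1 - Y₁ * Ring.inverse Y₂) ∧
    (1 - (1 - q) • Ring.inverse (1 - Y₁ * Ring.inverse Y₂)) *
        (algebraMap F A q + (1 - q) • Ring.inverse (1 - Y₁ * Ring.inverse Y₂))
      = (Y₂ - q • Y₁) * (Y₁ - q • Y₂) *
          Ring.inverse ((Y₂ - Y₁) * (Y₁ - Y₂)) := by
  have hc : Commute Y₁ Y₂ := hcomm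
  -- N := Y₂ - Y₁ is a unit
  have hUN : IsUnit (Y₂ - Y₁) := by
    have hcomm2 : Commute (Y₂ - algebraMap F A b) (Y₁ - algebraMap F A a) := by
      refine Commute.sub_left (Commute.sub_right hc.symm ?_) (Commute.sub_right ?_ ?_)
      · exact (Algebra.commutes a Y₂).symm
      · exact Algebra.commutes b Y₁
      · exact (Commute.all _ _).map (algebraMap F A)
    have hnil : IsNilpotent ((Y₂ - algebraMap F A b) - (Y₁ - algebraMap F A a)) :=
      Commute.isNilpotent_sub hcomm2 hnb hna
    have hu : IsUnit (algebraMap F A (b - a)) :=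
      (IsUnit.mk0 (b - a) (sub_ne_zero.mpr (Ne.symm hab))).map (algebraMap F A)
    have heq : Y₂ - Y₁ = ((Y₂ - algebraMap F A b) - (Y₁ - algebraMap F A a))
        + algebraMap F A (b - a) := by
      rw [map_sub]; abel
    rw [heq, add_comm]
    exact hnil.isUnit_add_left_of_commute hu (Algebra.commutes (b - a) _).symm
  have h1 : 1 - Y₁ * Ring.inverse Y₂ = (Y₂ - Y₁) * Ring.inverse Y₂ := by
    rw [sub_mul, Ring.mul_inverse_cancel Y₂ hY₂]
  have hU1 : IsUnit (1 - Y₁ * Ring.inverse Y₂) := by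
    rw [h1]; exact hUN.mul hY₂.ringInverse
  refine ⟨hU1, ?_⟩
  have hinv : Ring.inverse (1 - Y₁ * Ring.inverse Y₂) = Y₂ * Ring.inverse (Y₂ - Y₁) := by
    refine ring_inv_eq hU1 ?_
    rw [h1, mul_assoc, ← mul_assoc (Ring.inverse Y₂), Ring.inverse_mul_cancel Y₂ hY₂,
      one_mul, Ring.mul_inverse_cancel _ hUN]
  rw [hinv]
  set P : A := (1 - q) • (Y₂ * Ring.inverse (Y₂ - Y₁)) with hP
  have hUD : IsUnit ((Y₂ - Y₁) * (Y₁ - Y₂)) := by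
    have : (Y₂ - Y₁) * (Y₁ - Y₂) = -((Y₂ - Y₁) * (Y₂ - Y₁)) := by noncomm_ring
    rw [this]; exact (hUN.mul hUN).neg
  refine hUD.mul_right_cancel ?_
  rw [mul_assoc ((Y₂ - q • Y₁) * (Y₁ - q • Y₂)), Ring.inverse_mul_cancel _ hUD, mul_one]
  -- compute (α q + P) * (Y₂ - Y₁) = Y₂ - q • Y₁
  have e1 : (algebraMap F A q + P) * (Y₂ - Y₁) = Y₂ - q • Y₁ := by
    rw [add_mul, hP, smul_mul_assoc, mul_assoc, Ring.inverse_mul_cancel _ hUN, mul_one,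
      ← Algebra.smul_def]
    module
  have e2 : (1 - P) * (Y₁ - Y₂) = Y₁ - q • Y₂ := by
    have : (1 - P) * (Y₁ - Y₂) = -((1 - P) * (Y₂ - Y₁)) := by noncomm_ring
    rw [this, sub_mul, one_mul, hP, smul_mul_assoc, mul_assoc,
      Ring.inverse_mul_cancel _ hUN, mul_one]
    module
  have cB : Commute (Y₂ - q • Y₁) (Y₁ - Y₂) :=
    Commute.sub_left (Commute.sub_right hc.symm (Commute.refl Y₂))
      (Commute.smul_left (Commute.sub_right (Commute.refl Y₁) hc) q)
  have cF : Commute (Y₁ - q • Y₂) (Y₂ - q • Y₁) :=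
    Commute.sub_left
      (Commute.sub_right hc (Commute.smul_right (Commute.refl Y₁) q))
      (Commute.sub_right (Commute.smul_left (Commute.refl Y₂) q)
        (Commute.smul_left (Commute.smul_right hc.symm q) q))
  calc (1 - P) * (algebraMap F A q + P) * ((Y₂ - Y₁) * (Y₁ - Y₂))
      = (1 - P) * ((algebraMap F A q + P) * (Y₂ - Y₁)) * (Y₁ - Y₂) := by
        rw [mul_assoc (1 - P), ← mul_assoc (algebraMap F A q + P), ← mul_assoc]
    _ = (1 - P) * (Y₂ - q • Y₁) * (Y₁ - Y₂) := by rw [e1]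
    _ = (1 - P) * ((Y₁ - Y₂) * (Y₂ - q • Y₁)) := by rw [mul_assoc, cB.eq]
    _ = ((1 - P) * (Y₁ - Y₂)) * (Y₂ - q • Y₁) := by rw [mul_assoc]
    _ = (Y₁ - q • Y₂) * (Y₂ - q • Y₁) := by rw [e2]
    _ = (Y₂ - q • Y₁) * (Y₁ - q • Y₂) := cF.eq
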